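/- For a unimodal map T on [0,1] with critical point c whose orbit never returns exactly to c, the difference of two consecutive cutting times is again a cutting time; that is, for every k ≥ 1 there exists Q(k) < k with S_k − S_{k−1} = S_{Q(k)}. -/

import Mathlib

open Set Filter Topology

/-- A unimodal map on `[0,1]` with critical point `c = 1/2`. -/
def IsUnimodal (T : ℝ → ℝ) : Prop :=
  ContinuousOn T (Set.Icc 0 1) ∧ Set.MapsTo T (Set.Icc 0 1) (Set.Icc 0 1) ∧
    StrictMonoOn T (Set.Icc 0 (1/2)) ∧ StrictAntiOn T (Set.Icc (1/2) 1)

/-- Order lemma: if `x` and `c` lie in the interval `[b, g]` and `c` is not between `x`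
and `b`, then `x` lies between `b` and `c`. -/
lemma aux_mem_uIcc {x b g c : ℝ} (hx : x ∈ Set.uIcc b g) (hc : c ∈ Set.uIcc b g)
    (hn : c ∉ Set.uIcc x b) : x ∈ Set.uIcc b c := by
  simp only [Set.mem_uIcc] at hx hc hn ⊢
  push_neg at hn
  obtain ⟨hn1, hn2⟩ := hn
  by_cases hxc : x ≤ c
  · have hbc : b < c := hn1 hxc
    rcases hx with ⟨h1, h2⟩ | ⟨h1, h2⟩
    · exact Or.inl ⟨h1, hxc⟩
    · rcases hc with ⟨h3, h4⟩ | ⟨h3, h4⟩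
      · exact Or.inl ⟨by linarith, hxc⟩
      · exact Or.inl ⟨by linarith, hxc⟩
  · push_neg at hxc
    have hcb : c < b := by
      by_contra h
      push_neg at h
      exact absurd (hn2 h) (by linarith)
    rcases hx with ⟨h1, h2⟩ | ⟨h1, h2⟩
    · rcases hc with ⟨h3, h4⟩ | ⟨h3, h4⟩
      · exact Or.inr ⟨by linarith, by linarith⟩
      · exact Or.inr ⟨by linarith, by linarith⟩
    · exact Or.inr ⟨hxc.le, h2⟩

/-- For a unimodal map `T` with critical point `c` whose orbit is infinite
and never returns exactly to `c`, the difference of two consecutive cutting times is again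
a cutting time: for every `k ≥ 1` there is `Q(k) < k` with `S k − S (k-1) = S (Q k)`.

Here `D` is the Hofbauer tower (`D 1 = [c, c₁]`, `D (n+1) = [c_{n+1}, c₁]` if `c ∈ D n`
and `D (n+1) = T(D n)` otherwise) and `S` is the strictly monotone enumeration of the
cutting times, i.e. of `{n ≥ 1 | c ∈ D n}`, with `S 0 = 1`. -/
theorem stmt2 (T : ℝ → ℝ) (c : ℝ) (hc : c = 1/2) (hT : IsUnimodal T)
    (hnc : ∀ n, 1 ≤ n → T^[n] c ≠ c)
    (hinf : Function.Injective fun n : ℕ => T^[n] c)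
    (D : ℕ → Set ℝ)
    (hD1 : D 1 = Set.uIcc c (T c))
    (hDcut : ∀ n, 1 ≤ n → c ∈ D n → D (n + 1) = Set.uIcc (T^[n+1] c) (T c))
    (hDnot : ∀ n, 1 ≤ n → c ∉ D n → D (n + 1) = T '' D n)
    (S : ℕ → ℕ) (hS : StrictMono S) (hS0 : S 0 = 1)
    (hSrange : ∀ n, 1 ≤ n → (c ∈ D n ↔ n ∈ Set.range S)) :
    ∀ k, 1 ≤ k → ∃ q, q < k ∧ S k = S (k - 1) + S q := by
  obtain ⟨Tcont, Tmaps, Tmono, Tanti⟩ := hT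
  rw [← hc] at Tmono Tanti
  have hc0 : (0:ℝ) ≤ c := by rw [hc]; norm_num
  have hc1' : c ≤ 1 := by rw [hc]; norm_num
  -- basic facts about the critical orbit
  have hmem : ∀ n, T^[n] c ∈ Set.Icc (0:ℝ) 1 := by
    intro n
    induction n with
    | zero => exact ⟨hc0, hc1'⟩
    | succ n ih => rw [Function.iterate_succ_apply']; exact Tmaps ih
  have hmax : ∀ x ∈ Set.Icc (0:ℝ) 1, T x ≤ T c := by
    intro x hx
    rcases le_total x c with h | h
    · exact Tmono.monotoneOn ⟨hx.1, h⟩ ⟨hc0, le_refl c⟩ h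
    · exact Tanti.antitoneOn ⟨le_refl c, hc1'⟩ ⟨h, hx.2⟩ h
  -- images of intervals on a monotone branch
  have himgM : ∀ a b : ℝ, 0 ≤ a → a ≤ b → b ≤ c →
      T '' Set.Icc a b = Set.Icc (T a) (T b) := by
    intro a b ha hab hbc
    have hsub : Set.Icc a b ⊆ Set.Icc 0 c := Set.Icc_subset_Icc ha hbc
    have hsub1 : Set.Icc a b ⊆ Set.Icc (0:ℝ) 1 :=
      hsub.trans (Set.Icc_subset_Icc le_rfl hc1')
    apply Set.Subset.antisymm
    · rintro _ ⟨x, hx, rfl⟩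
      exact ⟨Tmono.monotoneOn ⟨ha, hab.trans hbc⟩ (hsub hx) hx.1,
        Tmono.monotoneOn (hsub hx) ⟨ha.trans hab, hbc⟩ hx.2⟩
    · exact intermediate_value_Icc hab (Tcont.mono hsub1)
  have himgA : ∀ a b : ℝ, c ≤ a → a ≤ b → b ≤ 1 →
      T '' Set.Icc a b = Set.Icc (T b) (T a) := by
    intro a b ha hab hb1
    have hsub : Set.Icc a b ⊆ Set.Icc c 1 := Set.Icc_subset_Icc ha hb1
    have hsub1 : Set.Icc a b ⊆ Set.Icc (0:ℝ) 1 :=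
      hsub.trans (Set.Icc_subset_Icc hc0 le_rfl)
    apply Set.Subset.antisymm
    · rintro _ ⟨x, hx, rfl⟩
      exact ⟨Tanti.antitoneOn (hsub hx) ⟨ha.trans hab, hb1⟩ hx.2,
        Tanti.antitoneOn ⟨ha, hab.trans hb1⟩ (hsub hx) hx.1⟩
    · exact intermediate_value_Icc' hab (Tcont.mono hsub1)
  have himg : ∀ a b : ℝ, a ∈ Set.Icc (0:ℝ) 1 → b ∈ Set.Icc (0:ℝ) 1 →
      c ∉ Set.uIcc a b → T '' Set.uIcc a b = Set.uIcc (T a) (T b) := by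
    have H : ∀ a b : ℝ, a ∈ Set.Icc (0:ℝ) 1 → b ∈ Set.Icc (0:ℝ) 1 → a ≤ b →
        c ∉ Set.Icc a b → T '' Set.Icc a b = Set.uIcc (T a) (T b) := by
      intro a b ha hb hab hn
      rw [Set.mem_Icc] at hn
      push_neg at hn
      rcases le_or_gt a c with h | h
      · have hbc : b < c := hn h
        have hTab : T a ≤ T b :=
          Tmono.monotoneOn ⟨ha.1, h⟩ ⟨ha.1.trans hab, hbc.le⟩ hab
        rw [himgM a b ha.1 hab hbc.le, Set.uIcc_of_le hTab]
      · have hTba : T b ≤ T a :=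
          Tanti.antitoneOn ⟨h.le, ha.2⟩ ⟨h.le.trans hab, hb.2⟩ hab
        rw [himgA a b h.le hab hb.2, Set.uIcc_of_ge hTba]
    intro a b ha hb hn
    rcases le_total a b with h | h
    · rw [Set.uIcc_of_le h] at hn ⊢
      exact H a b ha hb h hn
    · rw [Set.uIcc_of_ge h] at hn ⊢
      rw [Set.uIcc_comm (T a) (T b)]
      exact H b a hb ha h hn
  -- structure of the tower levels
  have lemA : ∀ n, 1 ≤ n → ∃ β, D n = Set.uIcc (T^[n] c) (T^[β] c) := by
    intro n hn
    induction n with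
    | zero => omega
    | succ n ih =>
      rcases Nat.eq_zero_or_pos n with rfl | hn1
      · refine ⟨0, ?_⟩
        show D 1 = Set.uIcc (T^[1] c) (T^[0] c)
        simp only [Function.iterate_one, Function.iterate_zero, id_eq]
        rw [hD1, Set.uIcc_comm]
      · obtain ⟨β, hβ⟩ := ih hn1
        by_cases hcn : c ∈ D n
        · exact ⟨1, by rw [hDcut n hn1 hcn, Function.iterate_one]⟩
        · refine ⟨β + 1, ?_⟩
          have hni' : c ∉ Set.uIcc (T^[n] c) (T^[β] c) := by rw [← hβ]; exact hcn
          rw [hDnot n hn1 hcn, hβ, himg _ _ (hmem n) (hmem β) hni',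
            ← Function.iterate_succ_apply' T n c, ← Function.iterate_succ_apply' T β c]
  have hDsub : ∀ n, 1 ≤ n → D n ⊆ Set.Icc (0:ℝ) 1 := by
    intro n hn
    obtain ⟨β, hβ⟩ := lemA n hn
    rw [hβ]
    intro x hx
    rw [Set.mem_uIcc] at hx
    obtain ⟨a1, a2⟩ := hmem n
    obtain ⟨b1, b2⟩ := hmem β
    rw [Set.mem_Icc]
    rcases hx with ⟨h3, h4⟩ | ⟨h3, h4⟩ <;> constructor <;> linarith
  -- the first orbit point lies above the critical point
  have hTc : c < T c := by
    by_contra hcon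
    push_neg at hcon
    have hneq : T c ≠ c := by
      have := hnc 1 le_rfl
      simpa using this
    have hlt : T c < c := lt_of_le_of_ne hcon hneq
    have hub : ∀ x ∈ Set.Icc (0:ℝ) 1, T x < c := fun x hx =>
      lt_of_le_of_lt (hmax x hx) hlt
    have hD2n : ∀ n, 2 ≤ n → D n ⊆ Set.Iio c := by
      intro n hn
      induction n with
      | zero => omega
      | succ n ih =>
        rcases Nat.lt_or_ge n 2 with h2 | h2
        · have hn1 : n = 1 := by omega
          subst hn1
          have hc1m : c ∈ D 1 := by rw [hD1]; exact Set.left_mem_uIcc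
          rw [hDcut 1 le_rfl hc1m]
          intro x hx
          rw [Set.mem_uIcc] at hx
          have e1 : T^[2] c < c := by
            rw [Function.iterate_succ_apply']
            exact hub _ (hmem 1)
          rcases hx with ⟨h3, h4⟩ | ⟨h3, h4⟩ <;> rw [Set.mem_Iio] <;> linarith
        · have hsub := ih h2
          have hni : c ∉ D n := fun h => lt_irrefl c (hsub h)
          rw [hDnot n (by omega) hni]
          rintro _ ⟨x, hx, rfl⟩
          exact hub x (hDsub n (by omega) hx)
    have h2S1 : 2 ≤ S 1 := by
      have := hS Nat.zero_lt_one
      omega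
    have hcS1 : c ∈ D (S 1) := (hSrange (S 1) (by omega)).2 ⟨1, rfl⟩
    exact lt_irrefl c (hD2n (S 1) h2S1 hcS1)
  -- main argument
  intro k hk
  set m := S (k - 1) with hm
  have hmk : m < S k := hS (by omega)
  have hm1 : 1 ≤ m := by
    have := hS.monotone (Nat.zero_le (k - 1))
    omega
  set j := S k - m with hjdef
  have hj1 : 1 ≤ j := by omega
  have hSkj : S k = m + j := by omega
  suffices hcj : c ∈ D j by
    obtain ⟨q, hq⟩ := (hSrange j hj1).1 hcj
    have hq' : q < k := by
      have : S q < S k := by omega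
      exact hS.lt_iff_lt.mp this
    exact ⟨q, hq', by omega⟩
  by_cases hjone : j = 1
  · rw [hjone, hD1]; exact Set.left_mem_uIcc
  · have hj2 : 2 ≤ j := by omega
    have hnr : ∀ i, 1 ≤ i → i < j → c ∉ D (m + i) := by
      intro i h1 h2 hmem'
      obtain ⟨q, hq⟩ := (hSrange (m + i) (by omega)).1 hmem'
      rcases Nat.lt_or_ge q k with h | h
      · have hqk : q ≤ k - 1 := by omega
        have := hS.monotone hqk
        omega
      · have := hS.monotone h
        omega
    have hcm : c ∈ D m := (hSrange m hm1).2 ⟨k - 1, rfl⟩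
    have key : ∀ i, 1 ≤ i → i ≤ j →
        D (m + i) = Set.uIcc (T^[m+i] c) (T^[i] c) ∧ D (m + i) ⊆ D i := by
      intro i
      induction i with
      | zero => omega
      | succ i ih =>
        intro _ h2
        rcases Nat.eq_zero_or_pos i with rfl | hi1
        · -- base case i = 1
          have ha1 : T^[m+1] c ≤ T c := by
            rw [Function.iterate_succ_apply']
            exact hmax _ (hmem m)
          have hcd : c ∉ D (m + 1) := hnr 1 le_rfl (by omega)
          rw [hDcut m hm1 hcm, Set.uIcc_of_le ha1, Set.mem_Icc] at hcd
          push_neg at hcd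
          have hca : c < T^[m+1] c := by
            by_contra hh
            push_neg at hh
            have := hcd hh
            linarith
          constructor
          · show D (m + 1) = Set.uIcc (T^[m+1] c) (T^[1] c)
            rw [hDcut m hm1 hcm, Function.iterate_one]
          · show D (m + 1) ⊆ D 1
            rw [hDcut m hm1 hcm, hD1]
            apply Set.uIcc_subset_uIcc
            · rw [Set.uIcc_of_le hTc.le, Set.mem_Icc]
              exact ⟨hca.le, ha1⟩
            · exact Set.right_mem_uIcc
        · obtain ⟨hEi, hIi⟩ := ih hi1 (by omega)
          have hni : c ∉ D (m + i) := hnr i hi1 (by omega)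
          have hni' : c ∉ Set.uIcc (T^[m+i] c) (T^[i] c) := by rw [← hEi]; exact hni
          have hEi1 : D (m + i + 1) = Set.uIcc (T^[m+i+1] c) (T^[i+1] c) := by
            rw [hDnot (m + i) (by omega) hni, hEi,
              himg _ _ (hmem (m + i)) (hmem i) hni',
              ← Function.iterate_succ_apply' T (m + i) c,
              ← Function.iterate_succ_apply' T i c]
          have hup : T^[m+i+1] c ≤ T c := by
            rw [Function.iterate_succ_apply']
            exact hmax _ (hmem (m + i))
          refine ⟨hEi1, ?_⟩
          show D (m + i + 1) ⊆ D (i + 1)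
          by_cases hci : c ∈ D i
          · obtain ⟨β, hβ⟩ := lemA i hi1
            have hx : T^[m+i] c ∈ Set.uIcc (T^[i] c) (T^[β] c) := by
              rw [← hβ]
              exact hIi (by rw [hEi]; exact Set.left_mem_uIcc)
            have hc' : c ∈ Set.uIcc (T^[i] c) (T^[β] c) := by rw [← hβ]; exact hci
            have hxm : T^[m+i] c ∈ Set.uIcc (T^[i] c) c := aux_mem_uIcc hx hc' hni'
            have hlow : T^[i+1] c ≤ T^[m+i+1] c := by
              rcases lt_or_gt_of_ne (hnc i hi1) with h | h
              · rw [Set.uIcc_of_le h.le, Set.mem_Icc] at hxm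
                rw [Function.iterate_succ_apply', Function.iterate_succ_apply']
                exact Tmono.monotoneOn ⟨(hmem i).1, h.le⟩
                  ⟨(hmem (m + i)).1, hxm.2⟩ hxm.1
              · rw [Set.uIcc_of_ge h.le, Set.mem_Icc] at hxm
                rw [Function.iterate_succ_apply', Function.iterate_succ_apply']
                exact Tanti.antitoneOn ⟨hxm.1, (hmem (m + i)).2⟩
                  ⟨h.le, (hmem i).2⟩ hxm.2
            have hup' : T^[i+1] c ≤ T c := by
              rw [Function.iterate_succ_apply']
              exact hmax _ (hmem i)
            rw [hEi1, hDcut i hi1 hci]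
            apply Set.uIcc_subset_uIcc
            · rw [Set.uIcc_of_le hup', Set.mem_Icc]
              exact ⟨hlow, hup⟩
            · exact Set.left_mem_uIcc
          · rw [hDnot i hi1 hci, hDnot (m + i) (by omega) hni]
            exact Set.image_mono hIi
    have hck : c ∈ D (m + j) := by
      have : c ∈ D (S k) := (hSrange (S k) (by omega)).2 ⟨k, rfl⟩
      rwa [hSkj] at this
    exact (key j hj1 le_rfl).2 hck
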